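/- For all integers n ≥ 14, the sum over k from 4 to ⌊(n-1)/2⌋ of 1/C(n,k) is at most 12(n-7)/(n(n-1)(n-2)(n-3)). -/

import Mathlib

lemma choose_mono_left {n a b : ℕ} (hab : a ≤ b) (hb : b ≤ n / 2) :
    n.choose a ≤ n.choose b := by
  induction b, hab using Nat.le_induction with
  | base => exact le_refl _
  | succ b hb' ih =>
    exact le_trans (ih (le_trans (Nat.le_succ b) hb))
      (Nat.choose_le_succ_of_lt_half_left (lt_of_lt_of_le (Nat.lt_succ_self b) hb))

theorem stmt_0 (n : ℕ) (hn : 14 ≤ n) :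
    ∑ k ∈ Finset.Icc 4 ((n - 1) / 2), (1 : ℝ) / (n.choose k) ≤
      12 * ((n : ℝ) - 7) / ((n : ℝ) * ((n : ℝ) - 1) * ((n : ℝ) - 2) * ((n : ℝ) - 3)) := by
  have hc4pos : 0 < n.choose 4 := Nat.choose_pos (by omega)
  have hc4 : ((n.choose 4 : ℝ)) * 24 = (n : ℝ) * ((n : ℝ) - 1) * ((n : ℝ) - 2) * ((n : ℝ) - 3) := by
    have h : (n - 3) * ((n - 2) * ((n - 1) * (n * 1))) = 24 * n.choose 4 := by
      have h := Nat.descFactorial_eq_factorial_mul_choose n 4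
      have h2 : n.descFactorial 4 = (n - 3) * ((n - 2) * ((n - 1) * (n * 1))) := rfl
      rw [h2] at h; rw [h]; norm_num [Nat.factorial]
    have := congrArg (Nat.cast : ℕ → ℝ) h
    push_cast [Nat.cast_sub (by omega : 1 ≤ n), Nat.cast_sub (by omega : 2 ≤ n),
      Nat.cast_sub (by omega : 3 ≤ n)] at this
    linarith
  have step : ∀ k ∈ Finset.Icc 4 ((n - 1) / 2), (1 : ℝ) / (n.choose k) ≤ 1 / (n.choose 4) := by
    intro k hk
    simp only [Finset.mem_Icc] at hk
    have hle : n.choose 4 ≤ n.choose k :=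
      choose_mono_left hk.1 (le_trans hk.2 (by omega))
    apply one_div_le_one_div_of_le (by exact_mod_cast hc4pos)
    exact_mod_cast hle
  have hsum := Finset.sum_le_card_nsmul _ _ _ step
  rw [Nat.card_Icc] at hsum
  have hcard : (((n - 1) / 2 + 1 - 4 : ℕ) : ℝ) ≤ ((n : ℝ) - 7) / 2 := by
    have h1 : ((n - 1) / 2 + 1 - 4 : ℕ) * 2 ≤ n - 7 := by omega
    have := congrArg (Nat.cast : ℕ → ℝ) (rfl : (n:ℕ) = n)
    have h2 : (((n - 1) / 2 + 1 - 4 : ℕ) : ℝ) * 2 ≤ ((n - 7 : ℕ) : ℝ) := by exact_mod_cast h1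
    rw [Nat.cast_sub (by omega : 7 ≤ n)] at h2
    push_cast at h2 ⊢
    linarith
  refine le_trans hsum ?_
  rw [nsmul_eq_mul]
  have hc4r : (0:ℝ) < (n.choose 4 : ℝ) := by exact_mod_cast hc4pos
  rw [mul_one_div, ← hc4, div_le_div_iff₀ hc4r (by nlinarith)]
  nlinarith [hcard, hc4r]
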